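/- For a trim lattice L, the downward label sets are exactly the independent sets of the Galois graph G(L): a subset S ⊆ [n] equals D^γ(x) for some x ∈ L if and only if no two elements of S are joined by an edge of G(L). In particular |L| equals the number of independent sets of G(L). -/

import Mathlib

/-- An element `x` of a lattice is *left modular* if `(y ⊔ x) ⊓ z = y ⊔ (x ⊓ z)`
for all `y ≤ z`. -/
def LeftModular {L : Type*} [Lattice L] (x : L) : Prop :=
  ∀ y z : L, y ≤ z → (y ⊔ x) ⊓ z = y ⊔ (x ⊓ z)

/-- The data of an extremal lattice of length `n` together with a fixed
maximal-length chain `x₀ ⋖ ⋯ ⋖ xₙ` and the induced numberings of the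
join-irreducibles `j₁, …, jₙ` and meet-irreducibles `m₁, …, mₙ`. -/
structure ExtremalChainData (L : Type*) [Lattice L] [Fintype L] [BoundedOrder L]
    (n : ℕ) where
  x : Fin (n + 1) → L
  x_strictMono : StrictMono x
  x_bot : x 0 = ⊥
  x_top : x (Fin.last n) = ⊤
  maxlen : ∀ (m : ℕ) (c : Fin (m + 1) → L), StrictMono c → m ≤ n
  j : Fin n → L
  m : Fin n → L
  j_irr : ∀ i, SupIrred (j i)
  m_irr : ∀ i, InfIrred (m i)
  j_inj : Function.Injective j
  m_inj : Function.Injective m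
  j_surj : ∀ a : L, SupIrred a → a ∈ Set.range j
  m_surj : ∀ a : L, InfIrred a → a ∈ Set.range m
  x_eq_sup : ∀ i : Fin (n + 1),
    x i = (Finset.univ.filter fun k : Fin n => (k : ℕ) < (i : ℕ)).sup j
  x_eq_inf : ∀ i : Fin (n + 1),
    x i = (Finset.univ.filter fun k : Fin n => (i : ℕ) ≤ (k : ℕ)).inf m

namespace ExtremalChainData

variable {L : Type*} [Lattice L] [Fintype L] [BoundedOrder L] {n : ℕ}

/-- `x_J`: the set of indices of join-irreducibles lying below `a`. -/
def setJ (D : ExtremalChainData L n) (a : L) : Set (Fin n) := {i | D.j i ≤ a}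

/-- `x_M`: the set of indices of meet-irreducibles lying above `a`. -/
def setM (D : ExtremalChainData L n) (a : L) : Set (Fin n) := {i | a ≤ D.m i}

/-- The Galois graph: a directed edge `i → k` when `jᵢ ≰ m_k` and `i ≠ k`. -/
def galoisEdge (D : ExtremalChainData L n) (i k : Fin n) : Prop :=
  ¬ D.j i ≤ D.m k ∧ i ≠ k

/-- The left modular labelling: `i` is the label of the cover `y ⋖ z` iff `i` is
minimal with `y ⊔ (xᵢ ⊓ z) = z`. -/
def IsLabel (D : ExtremalChainData L n) (y z : L) (i : Fin n) : Prop :=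
  y ⊔ (D.x i.succ ⊓ z) = z ∧ ∀ k : Fin n, y ⊔ (D.x k.succ ⊓ z) = z → i ≤ k

open scoped Classical in
/-- `D^γ(a)`: the set of labels of cover relations below `a`. -/
noncomputable def downLabels (D : ExtremalChainData L n) (a : L) : Finset (Fin n) :=
  Finset.univ.filter fun i => ∃ y, y ⋖ a ∧ D.IsLabel y a i

open scoped Classical in
/-- `U^γ(a)`: the set of labels of cover relations above `a`. -/
noncomputable def upLabels (D : ExtremalChainData L n) (a : L) : Finset (Fin n) :=
  Finset.univ.filter fun i => ∃ z, a ⋖ z ∧ D.IsLabel a z i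

/-- The fixed chain consists of left modular elements, i.e. the lattice is trim. -/
def IsTrim (D : ExtremalChainData L n) : Prop := ∀ i, LeftModular (D.x i)

end ExtremalChainData

namespace ExtremalChainData

open scoped Classical

set_option linter.unusedSectionVars false

variable {L : Type*} [Lattice L] [Fintype L] [BoundedOrder L] {n : ℕ}
variable (D : ExtremalChainData L n)

private lemma covBy_le_eq {y z c : L} (hc : y ⋖ z) (h1 : y ≤ c) (h2 : c < z) : c = y :=
  h1.lt_or_eq.elim (fun h => absurd h2 (hc.2 h)) fun h => h.symm

private lemma covBy_ge_eq {y z c : L} (hc : y ⋖ z) (h1 : y < c) (h2 : c ≤ z) : c = z :=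
  h2.lt_or_eq.elim (fun h => absurd h (hc.2 h1)) id

lemma exists_covBy_between {a b : L} (h : a < b) : ∃ y, a ≤ y ∧ y ⋖ b := by
  classical
  obtain ⟨y, hy, hymax⟩ := Finset.exists_maximal
    (s := Finset.univ.filter fun u => a ≤ u ∧ u < b) ⟨a, by simp [h]⟩
  obtain ⟨hy1, hy2⟩ := (Finset.mem_filter.mp hy).2
  exact ⟨y, hy1, hy2, fun c hc1 hc2 =>
    not_le_of_gt hc1
      (hymax (Finset.mem_filter.mpr ⟨Finset.mem_univ _, hy1.trans hc1.le, hc2⟩) hc1.le)⟩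

lemma x_mono : Monotone D.x := D.x_strictMono.monotone

lemma x_succ_eq (i : Fin n) : D.x i.succ = D.x i.castSucc ⊔ D.j i := by
  rw [D.x_eq_sup i.succ, D.x_eq_sup i.castSucc]
  have hins : (Finset.univ.filter fun k : Fin n => (k : ℕ) < (i.succ : ℕ)) =
      insert i (Finset.univ.filter fun k : Fin n => (k : ℕ) < (i.castSucc : ℕ)) := by
    ext k
    simp only [Finset.mem_filter, Finset.mem_univ, true_and, Finset.mem_insert,
      Fin.val_succ, Fin.coe_castSucc]
    constructor
    · intro hk
      rcases Nat.lt_succ_iff_lt_or_eq.mp hk with h | h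
      · exact Or.inr h
      · exact Or.inl (Fin.ext h)
    · rintro (rfl | hk)
      · omega
      · omega
  rw [hins, Finset.sup_insert, sup_comm]

lemma x_castSucc_lt_x_succ (i : Fin n) : D.x i.castSucc < D.x i.succ :=
  D.x_strictMono (Fin.castSucc_lt_succ (i := i))

lemma j_not_le_x_castSucc (i : Fin n) : ¬ D.j i ≤ D.x i.castSucc := by
  intro h
  have := D.x_succ_eq i
  rw [sup_eq_left.mpr h] at this
  exact (D.x_castSucc_lt_x_succ i).ne' this

lemma j_le_x_iff {i : Fin n} {s : Fin (n + 1)} : D.j i ≤ D.x s ↔ (i : ℕ) < (s : ℕ) := by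
  constructor
  · intro h
    by_contra hs
    push_neg at hs
    have hle : s ≤ i.castSucc := by
      rw [Fin.le_def]; simpa using hs
    exact D.j_not_le_x_castSucc i (h.trans (D.x_mono hle))
  · intro h
    rw [D.x_eq_sup s]
    exact Finset.le_sup (by simp [h])

lemma x_castSucc_eq_inf (k : Fin n) : D.x k.castSucc = D.m k ⊓ D.x k.succ := by
  rw [D.x_eq_inf k.castSucc, D.x_eq_inf k.succ]
  have hins : (Finset.univ.filter fun l : Fin n => (k.castSucc : ℕ) ≤ (l : ℕ)) =
      insert k (Finset.univ.filter fun l : Fin n => (k.succ : ℕ) ≤ (l : ℕ)) := by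
    ext l
    simp only [Finset.mem_filter, Finset.mem_univ, true_and, Finset.mem_insert,
      Fin.val_succ, Fin.coe_castSucc]
    constructor
    · intro hk
      rcases eq_or_lt_of_le hk with h | h
      · exact Or.inl (Fin.ext h.symm)
      · exact Or.inr h
    · rintro (rfl | hk) <;> omega
  rw [hins, Finset.inf_insert]

lemma not_x_succ_le_m (k : Fin n) : ¬ D.x k.succ ≤ D.m k := by
  intro h
  have := D.x_castSucc_eq_inf k
  rw [inf_eq_right.mpr h] at this
  exact (D.x_castSucc_lt_x_succ k).ne this

lemma x_le_m_iff {s : Fin (n + 1)} {k : Fin n} : D.x s ≤ D.m k ↔ (s : ℕ) ≤ (k : ℕ) := by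
  constructor
  · intro h
    by_contra hs
    push_neg at hs
    have hle : k.succ ≤ s := by
      rw [Fin.le_def]; simpa [Fin.val_succ] using hs
    exact D.not_x_succ_le_m k ((D.x_mono hle).trans h)
  · intro h
    rw [D.x_eq_inf s]
    exact Finset.inf_le (by simp [h])

lemma j_le_m_of_lt {i k : Fin n} (h : (i : ℕ) < (k : ℕ)) : D.j i ≤ D.m k := by
  refine (le_sup_right.trans (D.x_succ_eq i).symm.le).trans (D.x_le_m_iff.mpr ?_)
  simp [Fin.val_succ]; omega

lemma not_j_le_m_self (i : Fin n) : ¬ D.j i ≤ D.m i := by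
  intro h
  refine D.not_x_succ_le_m i ?_
  rw [D.x_succ_eq i]
  exact sup_le (D.x_le_m_iff.mpr (by simp)) h

lemma le_sup_j (a : L) : a ≤ (Finset.univ.filter fun i => D.j i ≤ a).sup D.j := by
  have wf : WellFounded ((· < ·) : L → L → Prop) := Finite.wellFounded_of_trans_of_irrefl _
  refine wf.induction
    (C := fun a => a ≤ (Finset.univ.filter fun i => D.j i ≤ a).sup D.j) a ?_
  intro b IH
  by_cases hb : SupIrred b
  · obtain ⟨i, hi⟩ := D.j_surj b hb
    exact hi ▸ Finset.le_sup (by simp [hi.le])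
  · rcases not_and_or.mp hb with hmin | h
    · rw [not_not] at hmin
      exact hmin.eq_bot ▸ bot_le
    · push_neg at h
      obtain ⟨c, d, hcd, hc, hd⟩ := h
      have hcb : c < b := lt_of_le_of_ne (hcd ▸ le_sup_left) hc
      have hdb : d < b := lt_of_le_of_ne (hcd ▸ le_sup_right) hd
      have hmonoc : (Finset.univ.filter fun i => D.j i ≤ c).sup D.j ≤
          (Finset.univ.filter fun i => D.j i ≤ b).sup D.j := by
        refine Finset.sup_mono fun i hi => ?_
        simp only [Finset.mem_filter, Finset.mem_univ, true_and] at hi ⊢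
        exact hi.trans hcb.le
      have hmonod : (Finset.univ.filter fun i => D.j i ≤ d).sup D.j ≤
          (Finset.univ.filter fun i => D.j i ≤ b).sup D.j := by
        refine Finset.sup_mono fun i hi => ?_
        simp only [Finset.mem_filter, Finset.mem_univ, true_and] at hi ⊢
        exact hi.trans hdb.le
      calc b = c ⊔ d := hcd.symm
        _ ≤ _ := sup_le ((IH c hcb).trans hmonoc) ((IH d hdb).trans hmonod)

lemma inf_m_le (b : L) : (Finset.univ.filter fun k => b ≤ D.m k).inf D.m ≤ b := by
  have wf : WellFounded ((· > ·) : L → L → Prop) := Finite.wellFounded_of_trans_of_irrefl _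
  refine wf.induction
    (C := fun b => (Finset.univ.filter fun k => b ≤ D.m k).inf D.m ≤ b) b ?_
  intro b IH
  by_cases hb : InfIrred b
  · obtain ⟨i, hi⟩ := D.m_surj b hb
    exact hi ▸ Finset.inf_le (by simp [hi.le])
  · rcases not_and_or.mp hb with hmax | h
    · rw [not_not] at hmax
      exact hmax.eq_top ▸ le_top
    · push_neg at h
      obtain ⟨c, d, hcd, hc, hd⟩ := h
      have hcb : b < c := lt_of_le_of_ne (hcd ▸ inf_le_left) (Ne.symm hc)
      have hdb : b < d := lt_of_le_of_ne (hcd ▸ inf_le_right) (Ne.symm hd)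
      have hmonoc : (Finset.univ.filter fun k => b ≤ D.m k).inf D.m ≤
          (Finset.univ.filter fun k => c ≤ D.m k).inf D.m := by
        refine Finset.inf_mono fun k hk => ?_
        simp only [Finset.mem_filter, Finset.mem_univ, true_and] at hk ⊢
        exact hcb.le.trans hk
      have hmonod : (Finset.univ.filter fun k => b ≤ D.m k).inf D.m ≤
          (Finset.univ.filter fun k => d ≤ D.m k).inf D.m := by
        refine Finset.inf_mono fun k hk => ?_
        simp only [Finset.mem_filter, Finset.mem_univ, true_and] at hk ⊢
        exact hdb.le.trans hk
      calc (Finset.univ.filter fun k => b ≤ D.m k).inf D.m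
          ≤ c ⊓ d := le_inf (hmonoc.trans (IH c hcb)) (hmonod.trans (IH d hdb))
        _ = b := hcd

lemma exists_j_nle {a b : L} (h : ¬ a ≤ b) : ∃ i, D.j i ≤ a ∧ ¬ D.j i ≤ b := by
  by_contra hc
  push_neg at hc
  refine h ((D.le_sup_j a).trans (Finset.sup_le fun i hi => ?_))
  exact hc i (Finset.mem_filter.mp hi).2

lemma exists_m_nle {a b : L} (h : ¬ a ≤ b) : ∃ k, b ≤ D.m k ∧ ¬ a ≤ D.m k := by
  by_contra hc
  push_neg at hc
  refine h (le_trans ?_ (D.inf_m_le b))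
  exact Finset.le_inf fun k hk => hc k (Finset.mem_filter.mp hk).2

lemma exists_isLabel {y z : L} (hc : y ⋖ z) : ∃ i, D.IsLabel y z i := by
  classical
  have hn : n ≠ 0 := by
    intro h
    subst h
    have h1 := D.le_sup_j z
    simp only [Finset.univ_eq_empty, Finset.filter_empty, Finset.sup_empty] at h1
    exact absurd (hc.lt.trans_le h1) (by simp)
  set k0 : Fin n := ⟨n - 1, by omega⟩ with hk0
  have hx : D.x k0.succ = ⊤ := by
    have : k0.succ = Fin.last n := by
      ext; simp [hk0, Fin.val_succ]; omega
    rw [this, D.x_top]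
  have hP : y ⊔ (D.x k0.succ ⊓ z) = z := by
    rw [hx, top_inf_eq, sup_eq_right.mpr hc.le]
  set T := Finset.univ.filter fun k : Fin n => y ⊔ (D.x k.succ ⊓ z) = z with hT
  have hTne : T.Nonempty := ⟨k0, by simp [hT, hP]⟩
  refine ⟨T.min' hTne, (Finset.mem_filter.mp (T.min'_mem hTne)).2, fun k hk => ?_⟩
  exact T.min'_le k (by simp [hT, hk])

lemma label_props (hD : D.IsTrim) {y z : L} {i : Fin n} (hc : y ⋖ z) (hl : D.IsLabel y z i) :
    D.j i ≤ z ∧ ¬ D.j i ≤ y ∧ y ⊔ D.j i = z ∧ y ≤ D.m i ∧ ¬ z ≤ D.m i ∧ D.m i ⊓ z = y := by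
  obtain ⟨hl1, hl2⟩ := hl
  have base : D.x i.castSucc ⊓ z ≤ y := by
    rcases Nat.eq_zero_or_pos (i : ℕ) with h0 | hpos
    · have hi0 : i.castSucc = 0 := by ext; simpa using h0
      rw [hi0, D.x_bot, bot_inf_eq]
      exact bot_le
    · by_contra hb
      have hyz : y ⊔ (D.x i.castSucc ⊓ z) = z :=
        covBy_ge_eq hc (left_lt_sup.mpr hb) (sup_le hc.le inf_le_right)
      set k : Fin n := ⟨(i : ℕ) - 1, by omega⟩ with hk
      have hks : k.succ = i.castSucc := by
        ext; simp [hk, Fin.val_succ]; omega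
      have := hl2 k (by rw [hks]; exact hyz)
      rw [Fin.le_def] at this
      simp only [hk] at this
      omega
  have lm : (y ⊔ D.x i.castSucc) ⊓ z = y := by
    rw [hD i.castSucc y z hc.le, sup_eq_left.mpr base]
  have claim2 : ¬ D.j i ≤ y ⊔ D.x i.castSucc := by
    intro hj
    have hz : z ≤ y ⊔ D.x i.castSucc := by
      conv_lhs => rw [← hl1]
      refine sup_le le_sup_left (le_trans inf_le_left ?_)
      rw [D.x_succ_eq i]
      exact sup_le le_sup_right hj
    have : z = y := by
      calc z = (y ⊔ D.x i.castSucc) ⊓ z := (inf_eq_right.mpr hz).symm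
        _ = y := lm
    exact hc.lt.ne' this
  have hjy : ¬ D.j i ≤ y := fun h => claim2 (h.trans le_sup_left)
  have hja : D.j i ≤ z := by
    have htm : ¬ D.x i.succ ⊓ z ≤ D.m i := by
      intro htm
      have h1 : D.x i.succ ⊓ z ≤ D.x i.castSucc := by
        rw [D.x_castSucc_eq_inf i]
        exact le_inf htm inf_le_left
      have h2 : D.x i.succ ⊓ z ≤ y := (le_inf h1 inf_le_right).trans base
      have : z = y := by rw [← hl1, sup_eq_left.mpr h2]
      exact hc.lt.ne' this
    obtain ⟨l, hl_le, hlm⟩ := D.exists_j_nle htm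
    have h1 : ¬ (l : ℕ) < (i : ℕ) := fun h => hlm (D.j_le_m_of_lt h)
    have h2 : (l : ℕ) < (i : ℕ) + 1 := by
      have := D.j_le_x_iff.mp (hl_le.trans inf_le_left)
      simpa [Fin.val_succ] using this
    have hli : l = i := Fin.ext (by omega)
    exact (hli ▸ hl_le).trans inf_le_right
  have hjz : y ⊔ D.j i = z := covBy_ge_eq hc (left_lt_sup.mpr hjy) (sup_le hc.le hja)
  have hym : y ≤ D.m i := by
    obtain ⟨kk, hk1, hk2⟩ := D.exists_m_nle claim2
    have h1 : ¬ (i : ℕ) < (kk : ℕ) := fun h => hk2 (D.j_le_m_of_lt h)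
    have h2 : (i : ℕ) ≤ (kk : ℕ) := by
      have := D.x_le_m_iff.mp (le_sup_right.trans hk1)
      simpa using this
    have hki : kk = i := Fin.ext (by omega)
    exact le_sup_left.trans (hki ▸ hk1)
  have hzm : ¬ z ≤ D.m i := fun h => D.not_j_le_m_self i (hja.trans h)
  have hne : D.m i ⊓ z ≠ z := fun h => hzm (h ▸ inf_le_left)
  have hmz : D.m i ⊓ z = y :=
    covBy_le_eq hc (le_inf hym hc.le) (lt_of_le_of_ne inf_le_right hne)
  exact ⟨hja, hjy, hjz, hym, hzm, hmz⟩

lemma isLabel_unique {y z : L} {i i' : Fin n} (h1 : D.IsLabel y z i) (h2 : D.IsLabel y z i') :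
    i = i' :=
  le_antisymm (h1.2 _ h2.1) (h2.2 _ h1.1)

lemma isLabel_of (hD : D.IsTrim) {y z : L} {i : Fin n} (hc : y ⋖ z) (h1 : D.j i ≤ z)
    (h2 : ¬ D.j i ≤ y) (h3 : y ≤ D.m i) : D.IsLabel y z i := by
  obtain ⟨i0, hl0⟩ := D.exists_isLabel hc
  obtain ⟨a0, b0, c0, d0, e0, f0⟩ := D.label_props hD hc hl0
  have hne : D.m i ⊓ z ≠ z := fun h => D.not_j_le_m_self i (h1.trans (h ▸ inf_le_left))
  have hmi : D.m i ⊓ z = y :=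
    covBy_le_eq hc (le_inf h3 hc.le) (lt_of_le_of_ne inf_le_right hne)
  have hii0 : ¬ (i : ℕ) < (i0 : ℕ) := fun h => h2 (f0 ▸ le_inf (D.j_le_m_of_lt h) h1)
  have hi0i : ¬ (i0 : ℕ) < (i : ℕ) := fun h => b0 (hmi ▸ le_inf (D.j_le_m_of_lt h) a0)
  have : i = i0 := Fin.ext (by omega)
  exact this ▸ hl0

lemma mem_downLabels {a : L} {i : Fin n} :
    i ∈ D.downLabels a ↔ ∃ y, y ⋖ a ∧ D.IsLabel y a i := by
  rw [downLabels, Finset.mem_filter]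
  simp

lemma mem_downLabels_iff (hD : D.IsTrim) {a : L} {i : Fin n} :
    i ∈ D.downLabels a ↔ D.j i ≤ a ∧ D.m i ⊓ a ⋖ a := by
  rw [D.mem_downLabels]
  constructor
  · rintro ⟨y, hy, hl⟩
    obtain ⟨a0, b0, c0, d0, e0, f0⟩ := D.label_props hD hy hl
    exact ⟨a0, f0 ▸ hy⟩
  · rintro ⟨h1, h2⟩
    exact ⟨_, h2, D.isLabel_of hD h2 h1
      (fun h => D.not_j_le_m_self i (h.trans inf_le_left)) inf_le_left⟩

lemma sup_downLabels (hD : D.IsTrim) (a : L) : (D.downLabels a).sup D.j = a := by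
  have hle : (D.downLabels a).sup D.j ≤ a :=
    Finset.sup_le fun i hi => ((D.mem_downLabels_iff hD).mp hi).1
  rcases eq_or_lt_of_le hle with h | h
  · exact h
  · exfalso
    obtain ⟨y, hy1, hy2⟩ := exists_covBy_between h
    obtain ⟨k, hk⟩ := D.exists_isLabel hy2
    have hkmem : k ∈ D.downLabels a := D.mem_downLabels.mpr ⟨y, hy2, hk⟩
    exact (D.label_props hD hy2 hk).2.1 ((Finset.le_sup hkmem).trans hy1)

lemma exists_up (hD : D.IsTrim) {w : L} {i : Fin n} (hja : D.j i ≤ w)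
    (hi : i ∉ D.downLabels w) :
    ∃ p, p ∈ D.downLabels w ∧ (i : ℕ) < (p : ℕ) ∧ ¬ D.j p ≤ D.m i := by
  have hlt : D.m i ⊓ w < w := lt_of_le_of_ne inf_le_right
    (fun h => D.not_j_le_m_self i (hja.trans (h ▸ inf_le_left)))
  obtain ⟨y, hy1, hy2⟩ := exists_covBy_between hlt
  obtain ⟨p, hp⟩ := D.exists_isLabel hy2
  have hpmem : p ∈ D.downLabels w := D.mem_downLabels.mpr ⟨y, hy2, hp⟩
  obtain ⟨a0, b0, c0, d0, e0, f0⟩ := D.label_props hD hy2 hp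
  have hnpm : ¬ D.j p ≤ D.m i := fun h => b0 ((le_inf h a0).trans hy1)
  have hpi : p ≠ i := fun h => hi (h ▸ hpmem)
  have h1 : ¬ (p : ℕ) < (i : ℕ) := fun h => hnpm (D.j_le_m_of_lt h)
  have h2 : (p : ℕ) ≠ (i : ℕ) := fun h => hpi (Fin.ext h)
  exact ⟨p, hpmem, by omega, hnpm⟩

lemma no_edge (hD : D.IsTrim) :
    ∀ w : L, ∀ i ∈ D.downLabels w, ∀ k ∈ D.downLabels w, i ≠ k → D.j i ≤ D.m k := by
  classical
  have wf : WellFounded ((· < ·) : L → L → Prop) := Finite.wellFounded_of_trans_of_irrefl _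
  intro w
  refine wf.induction
    (C := fun w => ∀ i ∈ D.downLabels w, ∀ k ∈ D.downLabels w, i ≠ k → D.j i ≤ D.m k) w ?_
  clear w
  intro w IH i hi k hk hik
  by_contra hedge
  set Src := Finset.univ.filter
    (fun s : Fin n => s ∈ D.downLabels w ∧ ∃ t ∈ D.downLabels w, s ≠ t ∧ ¬ D.j s ≤ D.m t)
    with hSrc
  have hSne : Src.Nonempty := ⟨i, by
    simp only [hSrc, Finset.mem_filter, Finset.mem_univ, true_and]
    exact ⟨hi, k, hk, hik, hedge⟩⟩
  set istar := Src.max' hSne with histar_def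
  have hmem : istar ∈ Src := Src.max'_mem hSne
  rw [hSrc, Finset.mem_filter] at hmem
  obtain ⟨-, histar, kstar, hkstar, hne2, hedge2⟩ := hmem
  have star : ∀ p, p ∈ D.downLabels w → p ≠ istar → D.j p ≤ D.m istar := by
    intro p hp hpne
    by_contra hnp
    have hpS : p ∈ Src := by
      simp only [hSrc, Finset.mem_filter, Finset.mem_univ, true_and]
      exact ⟨hp, istar, histar, hpne, hnp⟩
    have h1 : (p : ℕ) ≤ (istar : ℕ) := Fin.le_def.mp (Src.le_max' p hpS)
    have h2 : ¬ (p : ℕ) < (istar : ℕ) := fun h => hnp (D.j_le_m_of_lt h)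
    exact hpne (Fin.ext (by omega))
  have hki : (kstar : ℕ) < (istar : ℕ) := by
    have h3 : ¬ (istar : ℕ) < (kstar : ℕ) := fun h => hedge2 (D.j_le_m_of_lt h)
    have h4 : (istar : ℕ) ≠ (kstar : ℕ) := fun h => hne2 (Fin.ext h)
    omega
  set yk := D.m kstar ⊓ w with hyk_def
  obtain ⟨hjk_w, hyk_cov⟩ := (D.mem_downLabels_iff hD).mp hkstar
  have hji_w : D.j istar ≤ w := ((D.mem_downLabels_iff hD).mp histar).1
  have hjiyk : ¬ D.j istar ≤ yk := fun h => hedge2 (h.trans inf_le_left)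
  have hlabelk : D.IsLabel yk w kstar := D.isLabel_of hD hyk_cov hjk_w
    (fun h => D.not_j_le_m_self kstar (h.trans inf_le_left)) inf_le_left
  have hykm : ¬ yk ≤ D.m istar := by
    intro hle
    exact hne2 (D.isLabel_unique (D.isLabel_of hD hyk_cov hji_w hjiyk hle) hlabelk)
  have hq : ∃ q ∈ D.downLabels yk, ¬ D.j q ≤ D.m istar := by
    by_contra hcq
    push_neg at hcq
    refine hykm ?_
    rw [← D.sup_downLabels hD yk]
    exact Finset.sup_le hcq
  obtain ⟨q, hqmem, hqm⟩ := hq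
  have hjq_yk : D.j q ≤ yk := ((D.mem_downLabels_iff hD).mp hqmem).1
  have hq_gt : (istar : ℕ) < (q : ℕ) := by
    have h1 : ¬ (q : ℕ) < (istar : ℕ) := fun h => hqm (D.j_le_m_of_lt h)
    have h2 : (q : ℕ) ≠ (istar : ℕ) := fun h => hjiyk ((Fin.ext h : q = istar) ▸ hjq_yk)
    omega
  have hyk_lt : yk < w := hyk_cov.lt
  set Bad : Fin n → Fin n → Prop := fun s r => s ∈ D.downLabels w ∧ r ∈ D.downLabels yk ∧
    (istar : ℕ) < (s : ℕ) ∧ (r : ℕ) < (s : ℕ) ∧ ¬ D.j s ≤ D.m r with hBad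
  have step : ∀ s r, Bad s r → ∃ s' r', Bad s' r' ∧ (s : ℕ) < (s' : ℕ) := by
    rintro s r ⟨hsD, hrD, hs1, hs2, hs3⟩
    have hjs_w : D.j s ≤ w := ((D.mem_downLabels_iff hD).mp hsD).1
    by_cases hsk : D.j s ≤ D.m kstar
    · have hjs_yk : D.j s ≤ yk := le_inf hsk hjs_w
      by_cases hsyk : s ∈ D.downLabels yk
      · exact absurd (IH yk hyk_lt s hsyk r hrD (fun h => by rw [h] at hs2; omega)) hs3
      · obtain ⟨p', hp'mem, hp'gt, hp'nm⟩ := D.exists_up hD hjs_yk hsyk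
        by_cases hp'w : p' ∈ D.downLabels w
        · exfalso
          have hp'ne : p' ≠ s := fun h => by rw [h] at hp'gt; omega
          have hp'S : p' ∈ Src := by
            simp only [hSrc, Finset.mem_filter, Finset.mem_univ, true_and]
            exact ⟨hp'w, s, hsD, hp'ne, hp'nm⟩
          have := Fin.le_def.mp (Src.le_max' p' hp'S)
          omega
        · have hjp'_w : D.j p' ≤ w :=
            (((D.mem_downLabels_iff hD).mp hp'mem).1).trans hyk_lt.le
          obtain ⟨s', hs'mem, hs'gt, hs'nm⟩ := D.exists_up hD hjp'_w hp'w
          exact ⟨s', p', ⟨hs'mem, hp'mem, by omega, hs'gt, hs'nm⟩, by omega⟩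
    · exfalso
      have hsne : s ≠ kstar := fun h => by rw [h] at hs1; omega
      have hsS : s ∈ Src := by
        simp only [hSrc, Finset.mem_filter, Finset.mem_univ, true_and]
        exact ⟨hsD, kstar, hkstar, hsne, hsk⟩
      have := Fin.le_def.mp (Src.le_max' s hsS)
      omega
  have noBad : ∀ (fuel : ℕ) (s r : Fin n), Bad s r → n - (s : ℕ) ≤ fuel → False := by
    intro fuel
    induction fuel with
    | zero =>
      intro s r hb hle
      have := s.isLt
      omega
    | succ f IHf =>
      intro s r hb hle
      obtain ⟨s', r', hb', hgt⟩ := step s r hb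
      exact IHf s' r' hb' (by have := s'.isLt; omega)
  have hqw : q ∉ D.downLabels w := by
    intro hqw
    have hqne : q ≠ istar := fun h => by rw [h] at hq_gt; omega
    have hqS : q ∈ Src := by
      simp only [hSrc, Finset.mem_filter, Finset.mem_univ, true_and]
      exact ⟨hqw, istar, histar, hqne, hqm⟩
    have := Fin.le_def.mp (Src.le_max' q hqS)
    omega
  obtain ⟨s0, hs0mem, hs0gt, hs0nm⟩ := D.exists_up hD (hjq_yk.trans hyk_lt.le) hqw
  exact noBad n s0 q ⟨hs0mem, hqmem, by omega, hs0gt, hs0nm⟩ (by omega)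

lemma downLabels_subset (hD : D.IsTrim) {S : Finset (Fin n)}
    (hS : ∀ i ∈ S, ∀ k ∈ S, i ≠ k → D.j i ≤ D.m k) :
    D.downLabels (S.sup D.j) ⊆ S := by
  classical
  set w := S.sup D.j with hw
  have key : ∀ (fuel : ℕ) (p : Fin n), p ∈ D.downLabels w → p ∉ S → n - (p : ℕ) ≤ fuel →
      False := by
    intro fuel
    induction fuel with
    | zero =>
      intro p _ _ h
      have := p.isLt
      omega
    | succ f IHf =>
      intro p hpD hpS hle
      have hcov := ((D.mem_downLabels_iff hD).mp hpD).2
      have hwm : ¬ w ≤ D.m p := by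
        intro h
        rw [inf_eq_right.mpr h] at hcov
        exact lt_irrefl w hcov.lt
      have hl : ∃ l ∈ S, ¬ D.j l ≤ D.m p := by
        by_contra hcl
        push_neg at hcl
        exact hwm (Finset.sup_le hcl)
      obtain ⟨l, hlS, hlnm⟩ := hl
      have hlp : l ≠ p := fun h => hpS (h ▸ hlS)
      have hlgt : (p : ℕ) < (l : ℕ) := by
        have h1 : ¬ (l : ℕ) < (p : ℕ) := fun h => hlnm (D.j_le_m_of_lt h)
        have h2 : (l : ℕ) ≠ (p : ℕ) := fun h => hlp (Fin.ext h)
        omega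
      have hjl_w : D.j l ≤ w := Finset.le_sup hlS
      by_cases hlD : l ∈ D.downLabels w
      · exact hlnm (D.no_edge hD w l hlD p hpD hlp)
      · obtain ⟨p2, hp2D, hp2gt, hp2nm⟩ := D.exists_up hD hjl_w hlD
        have hp2S : p2 ∉ S := by
          intro hp2S
          exact hp2nm (hS p2 hp2S l hlS (fun h => by rw [h] at hp2gt; omega))
        exact IHf p2 hp2D hp2S (by have := p2.isLt; omega)
  intro p hp
  by_contra hps
  exact key n p hp hps (by omega)

lemma subset_downLabels (hD : D.IsTrim) {S : Finset (Fin n)}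
    (hS : ∀ i ∈ S, ∀ k ∈ S, i ≠ k → D.j i ≤ D.m k) :
    S ⊆ D.downLabels (S.sup D.j) := by
  intro i hiS
  set w := S.sup D.j with hw
  have hji : D.j i ≤ w := Finset.le_sup hiS
  have hlt : D.m i ⊓ w < w := lt_of_le_of_ne inf_le_right
    (fun h => D.not_j_le_m_self i (hji.trans (h ▸ inf_le_left)))
  obtain ⟨y, hy1, hy2⟩ := exists_covBy_between hlt
  obtain ⟨kk, hkl⟩ := D.exists_isLabel hy2
  have hkmem : kk ∈ D.downLabels w := D.mem_downLabels.mpr ⟨y, hy2, hkl⟩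
  have hkS : kk ∈ S := D.downLabels_subset hD hS hkmem
  obtain ⟨a0, b0, c0, d0, e0, f0⟩ := D.label_props hD hy2 hkl
  by_cases hki : kk = i
  · subst hki
    exact (D.mem_downLabels_iff hD).mpr ⟨hji, f0 ▸ hy2⟩
  · exfalso
    exact b0 ((le_inf (hS kk hkS i hiS hki) a0).trans hy1)

end ExtremalChainData

open scoped Classical in
/-- In a trim lattice, the downward label sets are exactly the independent sets
of the Galois graph (directions ignored); in particular the number of elements
of `L` equals the number of independent sets of `G(L)`. -/
theorem down_labels_eq_independent_sets {L : Type*} [Lattice L] [Fintype L]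
    [BoundedOrder L] {n : ℕ} (D : ExtremalChainData L n) (hD : D.IsTrim) :
    (∀ S : Finset (Fin n), (∃ a : L, D.downLabels a = S) ↔
      (∀ i ∈ S, ∀ k ∈ S, i ≠ k → ¬ D.galoisEdge i k ∧ ¬ D.galoisEdge k i)) ∧
    Fintype.card L = (Finset.univ.filter fun S : Finset (Fin n) =>
      ∀ i ∈ S, ∀ k ∈ S, i ≠ k → ¬ D.galoisEdge i k ∧ ¬ D.galoisEdge k i).card := by
  classical
  have key : ∀ S : Finset (Fin n), (∃ a : L, D.downLabels a = S) ↔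
      (∀ i ∈ S, ∀ k ∈ S, i ≠ k → ¬ D.galoisEdge i k ∧ ¬ D.galoisEdge k i) := by
    intro S
    constructor
    · rintro ⟨a, rfl⟩ i hi k hk hik
      constructor
      · intro he
        exact he.1 (D.no_edge hD a i hi k hk hik)
      · intro he
        exact he.1 (D.no_edge hD a k hk i hi hik.symm)
    · intro h
      have hS : ∀ i ∈ S, ∀ k ∈ S, i ≠ k → D.j i ≤ D.m k := by
        intro i hi k hk hik
        by_contra hn
        exact (h i hi k hk hik).1 ⟨hn, hik⟩
      exact ⟨S.sup D.j, le_antisymm (D.downLabels_subset hD hS) (D.subset_downLabels hD hS)⟩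
  refine ⟨key, ?_⟩
  have hinj : Function.Injective (fun a : L => D.downLabels a) := by
    intro a b hab
    rw [← D.sup_downLabels hD a, ← D.sup_downLabels hD b]
    simp only at hab
    rw [hab]
  have himg : Finset.univ.image (fun a : L => D.downLabels a) =
      Finset.univ.filter (fun S : Finset (Fin n) =>
        ∀ i ∈ S, ∀ k ∈ S, i ≠ k → ¬ D.galoisEdge i k ∧ ¬ D.galoisEdge k i) := by
    ext S
    simp only [Finset.mem_image, Finset.mem_univ, true_and, Finset.mem_filter]
    exact key S
  rw [← himg, Finset.card_image_of_injective _ hinj, Finset.card_univ]
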